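/- The pair ([0,1], σ) with σ the folding map is essentially free: for all m ≠ n in ℕ there is no nonempty open subset W of dom(T^m) ∩ dom(T^n) on which T^m and T^n agree, where T is the restriction of σ to points whose relevant iterates avoid 1/2. -/
import Mathlib


/-- The folding (tent) map on the unit interval. -/
noncomputable def fold (t : ℝ) : ℝ := min (2 * t) (2 - 2 * t)

/-- The domain of the n-th iterate of T = fold restricted to [0,1] \ {1/2}:
points of [0,1] whose first n iterates avoid 1/2. -/
noncomputable def domFold (n : ℕ) : Set ℝ :=
  {t ∈ Set.Icc 0 1 | ∀ k < n, fold^[k] t ≠ 1 / 2}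

lemma fold_key (m : ℕ) : ∀ a b : ℝ, 0 ≤ a → a ≤ b → b ≤ 1 →
    (∀ t ∈ Set.Icc a b, ∀ k < m, fold^[k] t ≠ 1 / 2) →
    |fold^[m] b - fold^[m] a| = 2 ^ m * (b - a) := by
  induction m with
  | zero => intro a b ha hab hb _; simp [abs_of_nonneg (by linarith : (0:ℝ) ≤ b - a)]
  | succ m ih =>
    intro a b ha hab hb hav
    have hne : ∀ t ∈ Set.Icc a b, t ≠ 1 / 2 := by
      intro t ht
      have := hav t ht 0 (Nat.succ_pos m)
      simpa using this
    rcases lt_or_ge b (1/2) with hb2 | hb2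
    · -- fold t = 2t on [a,b]
      have hfold : ∀ t ∈ Set.Icc a b, fold t = 2 * t := by
        intro t ht
        have : t ≤ b := ht.2
        have : 2 * t ≤ 2 - 2 * t := by linarith
        simpa [fold] using min_eq_left this
      have h2a : (0:ℝ) ≤ 2 * a := by linarith
      have h2ab : 2 * a ≤ 2 * b := by linarith
      have h2b : 2 * b ≤ 1 := by linarith
      have hav' : ∀ u ∈ Set.Icc (2*a) (2*b), ∀ k < m, fold^[k] u ≠ 1 / 2 := by
        intro u hu k hk
        have hu2 : u / 2 ∈ Set.Icc a b := ⟨by linarith [hu.1], by linarith [hu.2]⟩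
        have : fold (u / 2) = u := by rw [hfold _ hu2]; ring
        have := hav (u/2) hu2 (k+1) (by omega)
        rwa [Function.iterate_succ_apply, ‹fold (u/2) = u›] at this
      have := ih (2*a) (2*b) h2a h2ab h2b hav'
      rw [Function.iterate_succ_apply, Function.iterate_succ_apply,
        hfold a ⟨le_refl a, hab⟩, hfold b ⟨hab, le_refl b⟩, this]
      ring
    · -- 1/2 < a case (else 1/2 ∈ [a,b])
      have ha2 : 1/2 < a := by
        by_contra hcon
        push_neg at hcon
        exact hne (1/2) ⟨hcon, hb2⟩ rfl
      have hfold : ∀ t ∈ Set.Icc a b, fold t = 2 - 2 * t := by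
        intro t ht
        have : a ≤ t := ht.1
        have : 2 - 2 * t ≤ 2 * t := by linarith
        simpa [fold] using min_eq_right this
      have h2a : (0:ℝ) ≤ 2 - 2 * b := by linarith
      have h2ab : 2 - 2 * b ≤ 2 - 2 * a := by linarith
      have h2b : 2 - 2 * a ≤ 1 := by linarith
      have hav' : ∀ u ∈ Set.Icc (2 - 2*b) (2 - 2*a), ∀ k < m, fold^[k] u ≠ 1 / 2 := by
        intro u hu k hk
        have hu2 : (2 - u) / 2 ∈ Set.Icc a b := ⟨by linarith [hu.2], by linarith [hu.1]⟩
        have heq : fold ((2 - u) / 2) = u := by rw [hfold _ hu2]; ring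
        have := hav ((2-u)/2) hu2 (k+1) (by omega)
        rwa [Function.iterate_succ_apply, heq] at this
      have := ih (2 - 2*b) (2 - 2*a) h2a h2ab h2b hav'
      rw [Function.iterate_succ_apply, Function.iterate_succ_apply,
        hfold a ⟨le_refl a, hab⟩, hfold b ⟨hab, le_refl b⟩, abs_sub_comm, this]
      ring

/-- The pair ([0,1], fold) is essentially free: if T^m and T^n agree on a nonempty
relatively open subset of dom(T^m) ∩ dom(T^n) (open in the subspace [0,1]), then m = n. -/
theorem fold_essentially_free (m n : ℕ)
    (h : ∃ V : Set ℝ, IsOpen V ∧ (V ∩ Set.Icc 0 1).Nonempty ∧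
      V ∩ Set.Icc 0 1 ⊆ domFold m ∩ domFold n ∧
      ∀ t ∈ V ∩ Set.Icc 0 1, fold^[m] t = fold^[n] t) :
    m = n := by
  obtain ⟨V, hV, ⟨t0, ht0⟩, hsub, heq⟩ := h
  obtain ⟨ε, hε, hball⟩ := Metric.isOpen_iff.mp hV t0 ht0.1
  have ht01 : t0 ∈ Set.Icc (0:ℝ) 1 := ht0.2
  set a := max 0 (t0 - ε/2) with hadef
  set b := min 1 (t0 + ε/2) with hbdef
  have hab : a < b := by
    have h1 := ht01.1
    have h2 := ht01.2
    apply max_lt <;> apply lt_min <;> linarith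
  have hIccsub : Set.Icc a b ⊆ V ∩ Set.Icc 0 1 := by
    intro t ht
    have h1 : (0:ℝ) ≤ t := le_trans (le_max_left _ _) ht.1
    have h2 : t ≤ 1 := le_trans ht.2 (min_le_left _ _)
    have h3 : t0 - ε/2 ≤ t := le_trans (le_max_right _ _) ht.1
    have h4 : t ≤ t0 + ε/2 := le_trans ht.2 (min_le_right _ _)
    refine ⟨hball ?_, h1, h2⟩
    rw [Metric.mem_ball, Real.dist_eq, abs_lt]
    constructor <;> linarith
  have ha0 : (0:ℝ) ≤ a := le_max_left _ _
  have hb1 : b ≤ 1 := min_le_left _ _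
  have havm : ∀ t ∈ Set.Icc a b, ∀ k < m, fold^[k] t ≠ 1 / 2 := fun t ht =>
    ((hsub (hIccsub ht)).1).2
  have havn : ∀ t ∈ Set.Icc a b, ∀ k < n, fold^[k] t ≠ 1 / 2 := fun t ht =>
    ((hsub (hIccsub ht)).2).2
  have hm := fold_key m a b ha0 hab.le hb1 havm
  have hn := fold_key n a b ha0 hab.le hb1 havn
  have hea : fold^[m] a = fold^[n] a := heq a (hIccsub ⟨le_refl a, hab.le⟩)
  have heb : fold^[m] b = fold^[n] b := heq b (hIccsub ⟨hab.le, le_refl b⟩)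
  have hpow : (2:ℝ) ^ m * (b - a) = 2 ^ n * (b - a) := by
    rw [← hm, ← hn, hea, heb]
  have hpow2 : (2:ℝ) ^ m = 2 ^ n := by
    have hba : b - a ≠ 0 := by linarith
    exact mul_right_cancel₀ hba hpow
  exact pow_right_injective₀ two_pos (by norm_num) hpow2
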